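/- Neither 000 nor 111 is a factor of the Thue-Morse word; moreover, for every x ∈ {0,1} and n ≥ 0, the word x·μ^{2n}(x·x̄·x)·x is not a factor of the Thue-Morse word. -/

import Mathlib

/-- The Thue-Morse morphism on letters: μ(0)=01, μ(1)=10 (0 = `false`, 1 = `true`). -/
def mu : Bool → List Bool
  | false => [false, true]
  | true  => [true, false]

/-- The Thue-Morse morphism extended to words. -/
def muW (w : List Bool) : List Bool := w.flatMap mu

/-- The finite word `u` is a prefix of the infinite word `x`. -/
def IsPrefixI (u : List Bool) (x : ℕ → Bool) : Prop :=
  ∀ i, i < u.length → u.getD i false = x i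

/-- `t` is the Thue-Morse word: every `μ^n(0)` is a prefix of `t`. -/
def IsTMWord (t : ℕ → Bool) : Prop :=
  ∀ n, IsPrefixI (muW^[n] [false]) t

/-- The finite word `u` is a factor of the infinite word `x`. -/
def IsFactorI (u : List Bool) (x : ℕ → Bool) : Prop :=
  ∃ k, ∀ i, i < u.length → u.getD i false = x (k + i)

lemma muW_cons (a : Bool) (w : List Bool) : muW (a :: w) = mu a ++ muW w := by
  simp [muW]

lemma muW_length (w : List Bool) : (muW w).length = 2 * w.length := by
  induction w with
  | nil => simp [muW]
  | cons a w ih => cases a <;> simp [muW_cons, mu, ih] <;> omega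

lemma muW_getD_even (w : List Bool) (i : ℕ) (h : i < w.length) :
    (muW w).getD (2*i) false = w.getD i false := by
  induction w generalizing i with
  | nil => simp at h
  | cons a w ih =>
    cases i with
    | zero => cases a <;> simp [muW_cons, mu]
    | succ i =>
      have h2 : 2 * (i+1) = (2*i) + 1 + 1 := by ring
      have hi : i < w.length := by simpa using Nat.lt_of_succ_lt_succ h
      cases a <;> simp [muW_cons, mu, h2, List.getD_cons_succ] <;> simpa [List.getD] using ih i hi

lemma muW_getD_odd (w : List Bool) (i : ℕ) (h : i < w.length) :
    (muW w).getD (2*i+1) false = !(w.getD i false) := by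
  induction w generalizing i with
  | nil => simp at h
  | cons a w ih =>
    cases i with
    | zero => cases a <;> simp [muW_cons, mu]
    | succ i =>
      have h2 : 2 * (i+1) + 1 = ((2*i)+1) + 1 + 1 := by ring
      have hi : i < w.length := by simpa using Nat.lt_of_succ_lt_succ h
      cases a <;> simp [muW_cons, mu, h2, List.getD_cons_succ] <;> simpa [List.getD] using ih i hi

lemma iter_len (n : ℕ) : (muW^[n] [false]).length = 2^n := by
  induction n with
  | zero => simp
  | succ n ih => rw [Function.iterate_succ_apply', muW_length, ih]; ring

lemma tm_even (t : ℕ → Bool) (ht : IsTMWord t) (i : ℕ) : t (2*i) = t i := by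
  have h1 : i < (muW^[i] [false]).length := by rw [iter_len]; exact Nat.lt_two_pow_self (n := i)
  have h2 : 2*i < (muW^[i+1] [false]).length := by
    rw [iter_len, pow_succ]
    have := Nat.lt_two_pow_self (n := i); omega
  have e1 := ht i i h1
  have e2 := ht (i+1) (2*i) h2
  rw [Function.iterate_succ_apply', muW_getD_even _ i h1, e1] at e2
  exact e2.symm

lemma tm_odd (t : ℕ → Bool) (ht : IsTMWord t) (i : ℕ) : t (2*i+1) = !t i := by
  have h1 : i < (muW^[i] [false]).length := by rw [iter_len]; exact Nat.lt_two_pow_self (n := i)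
  have h2 : 2*i+1 < (muW^[i+1] [false]).length := by
    rw [iter_len, pow_succ]
    have := Nat.lt_two_pow_self (n := i); omega
  have e1 := ht i i h1
  have e2 := ht (i+1) (2*i+1) h2
  rw [Function.iterate_succ_apply', muW_getD_odd _ i h1, e1] at e2
  exact e2.symm

lemma pair_odd (t : ℕ → Bool) (ht : IsTMWord t) (a : ℕ) (h : t a = t (a+1)) :
    ∃ m, a = 2*m + 1 := by
  rcases Nat.even_or_odd a with ⟨m, hm⟩ | ⟨m, hm⟩
  · exfalso
    subst hm
    rw [show m + m = 2*m by ring] at h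
    rw [tm_odd t ht, tm_even t ht] at h
    simp at h
  · exact ⟨m, by omega⟩

lemma u_len (x : Bool) (m : ℕ) : (muW^[m] [x, !x, x]).length = 3 * 2^m := by
  induction m with
  | zero => simp
  | succ m ih => rw [Function.iterate_succ_apply', muW_length, ih]; ring

lemma u_head (x : Bool) (m : ℕ) : (muW^[m] [x, !x, x]).getD 0 false = x := by
  induction m with
  | zero => simp
  | succ m ih =>
    rw [Function.iterate_succ_apply']
    have h0 : 0 < (muW^[m] [x, !x, x]).length := by rw [u_len]; positivity
    have h := muW_getD_even (muW^[m] [x, !x, x]) 0 h0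
    rw [Nat.mul_zero] at h
    rw [h]; exact ih

lemma u_snd (x : Bool) (m : ℕ) : (muW^[m] [x, !x, x]).getD 1 false = !x := by
  cases m with
  | zero => simp
  | succ m =>
    rw [Function.iterate_succ_apply']
    have h0 : 0 < (muW^[m] [x, !x, x]).length := by rw [u_len]; positivity
    have h := muW_getD_odd (muW^[m] [x, !x, x]) 0 h0
    rw [Nat.mul_zero, Nat.zero_add] at h
    rw [h, u_head]

lemma u_last (x : Bool) (n : ℕ) :
    (muW^[2*n] [x, !x, x]).getD (3 * 2^(2*n) - 1) false = x := by
  induction n with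
  | zero => simp
  | succ n ih =>
    have h22 : 2*(n+1) = (2*n + 1) + 1 := by ring
    rw [h22, Function.iterate_succ_apply', Function.iterate_succ_apply']
    set u := muW^[2*n] [x, !x, x] with hu
    set L := 3 * 2^(2*n) with hLdef
    have hLpos : 0 < L := by positivity
    have hL : u.length = L := u_len x (2*n)
    have hw : (muW u).length = 2 * L := by rw [muW_length, hL]
    have h1 : L - 1 < u.length := by omega
    have h2 : 2*L - 1 < (muW u).length := by omega
    have e1 : (muW u).getD (2*(L-1)+1) false = !(u.getD (L-1) false) :=
      muW_getD_odd u (L-1) h1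
    have e2 : (muW (muW u)).getD (2*(2*L-1)+1) false = !((muW u).getD (2*L-1) false) :=
      muW_getD_odd (muW u) (2*L-1) h2
    have q1 : 2*(L-1)+1 = 2*L - 1 := by omega
    have hp : 0 < 2^(2*n) := by positivity
    have q2 : 2*(2*L-1)+1 = 3 * 2^(2*n+1+1) - 1 := by
      rw [hLdef, pow_succ, pow_succ]; omega
    rw [q1] at e1
    rw [q2] at e2
    rw [e2, e1, ih, Bool.not_not]

lemma W_getD0 (x : Bool) (A : List Bool) : ([x] ++ A ++ [x]).getD 0 false = x := by
  rw [List.append_assoc, List.singleton_append, List.getD_cons_zero]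

lemma W_getD_mid (x : Bool) (A : List Bool) (j : ℕ) (hj : j < A.length) :
    ([x] ++ A ++ [x]).getD (j+1) false = A.getD j false := by
  rw [List.append_assoc, List.singleton_append, List.getD_cons_succ,
    List.getD_append _ _ _ _ hj]

lemma W_getD_end (x : Bool) (A : List Bool) :
    ([x] ++ A ++ [x]).getD (A.length + 1) false = x := by
  rw [List.append_assoc, List.singleton_append, List.getD_cons_succ,
    List.getD_append_right _ _ _ _ (le_refl _), Nat.sub_self, List.getD_cons_zero]

lemma W_len (x : Bool) (A : List Bool) : ([x] ++ A ++ [x]).length = A.length + 2 := by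
  simp only [List.length_append, List.length_singleton]; omega

lemma main_step (t : ℕ → Bool) (ht : IsTMWord t) :
    ∀ n (x : Bool) (k : ℕ), ¬ (∀ i, i < ([x] ++ muW^[2*n] [x, !x, x] ++ [x]).length →
      ([x] ++ muW^[2*n] [x, !x, x] ++ [x]).getD i false = t (k + i)) := by
  intro n
  induction n with
  | zero =>
    intro x k h
    simp only [Nat.mul_zero, Function.iterate_zero, id_eq] at h
    have hlen : ([x] ++ [x, !x, x] ++ [x]).length = 5 := by simp
    have h0 := h 0 (by omega)
    have h1 := h 1 (by omega)
    have h3 := h 3 (by omega)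
    have h4 := h 4 (by omega)
    simp only [List.getD] at h0 h1 h3 h4
    norm_num at h0 h1 h3 h4
    obtain ⟨a, ha⟩ := pair_odd t ht k (by rw [← h0, ← h1])
    rw [show k + 3 = 2*(a+2) by omega, tm_even t ht] at h3
    rw [show k + 4 = 2*(a+2)+1 by omega, tm_odd t ht, ← h3] at h4
    simp at h4
  | succ n ih =>
    intro x k h
    set u := muW^[2*n] [x, !x, x] with hu
    set L := 3 * 2^(2*n) with hLdef
    have hLpos : 0 < L := by positivity
    have hL : u.length = L := u_len x (2*n)
    have hiter : muW^[2*(n+1)] [x, !x, x] = muW (muW u) := by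
      rw [show 2*(n+1) = (2*n+1)+1 by ring, Function.iterate_succ_apply',
        Function.iterate_succ_apply']
    have hwlen : (muW u).length = 2 * L := by rw [muW_length, hL]
    have hvlen : (muW (muW u)).length = 4 * L := by rw [muW_length, hwlen]; ring
    rw [hiter] at h
    have hWlen : ([x] ++ muW (muW u) ++ [x]).length = 4*L + 2 := by
      rw [W_len, hvlen]
    -- first letter
    have h0 := h 0 (by omega)
    rw [W_getD0] at h0
    -- extract inner occurrences
    have hv : ∀ i, i < 4*L → (muW (muW u)).getD i false = t (k + 1 + i) := by
      intro i hi
      have e := h (i+1) (by omega)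
      rw [W_getD_mid x _ i (by omega)] at e
      rw [show k + (i+1) = k + 1 + i by ring] at e
      exact e
    -- t (k+1) = x
    have hfirst : t (k+1) = x := by
      have e := hv 0 (by omega)
      have e1 := muW_getD_even (muW u) 0 (by omega)
      have e2 := muW_getD_even u 0 (by omega)
      rw [Nat.mul_zero] at e1 e2
      rw [e1, e2, u_head] at e
      simpa using e.symm
    -- k is odd
    obtain ⟨a, ha⟩ := pair_odd t ht k (by rw [hfirst]; simpa using h0.symm)
    set M := a + 1 with hM
    have hk1 : k + 1 = 2 * M := by omega
    -- muW u occurs at position M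
    have hw : ∀ j, j < 2*L → (muW u).getD j false = t (M + j) := by
      intro j hj
      have e := hv (2*j) (by omega)
      rw [muW_getD_even (muW u) j (by omega)] at e
      rw [show k + 1 + 2*j = 2*(M + j) by omega, tm_even t ht] at e
      exact e
    -- M is even
    have w1 : (muW u).getD 1 false = !x := by
      have e := muW_getD_odd u 0 (by omega)
      rw [Nat.mul_zero, Nat.zero_add] at e
      rw [e, u_head]
    have w2 : (muW u).getD 2 false = !x := by
      have e := muW_getD_even u 1 (by omega)
      rw [show 2*1 = 2 from rfl] at e
      rw [e, u_snd]
    obtain ⟨b, hb⟩ := pair_odd t ht (M+1) (by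
      rw [← hw 1 (by omega), ← hw 2 (by omega), w1, w2])
    have hMb : M = 2 * b := by omega
    have hbpos : 1 ≤ b := by omega
    -- u occurs at position b
    have hu2 : ∀ j, j < L → u.getD j false = t (b + j) := by
      intro j hj
      have e := hw (2*j) (by omega)
      rw [muW_getD_even u j (by omega)] at e
      rw [show M + 2*j = 2*(b + j) by omega, tm_even t ht] at e
      exact e
    -- trailing x : t (b + L) = x
    have hend := h (4*L + 1) (by omega)
    rw [show (4*L + 1) = (muW (muW u)).length + 1 by omega, W_getD_end] at hend
    rw [show k + ((muW (muW u)).length + 1) = 2*(2*(b+L)) by omega,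
      tm_even t ht, tm_even t ht] at hend
    -- leading x : t (b - 1) = x
    have hlead : t (b - 1) = x := by
      rw [show k + 0 = 2*(2*(b-1)+1)+1 by omega, tm_odd t ht,
        show 2*(b-1)+1 = 2*(b-1)+1 from rfl, tm_odd t ht] at h0
      simpa using h0.symm
    -- contradiction with ih at position b - 1
    apply ih x (b - 1)
    intro i hi
    rw [← hu] at hi ⊢
    rw [W_len, hL] at hi
    rcases i with _ | j
    · rw [W_getD0, Nat.add_zero, hlead]
    · by_cases hj : j < L
      · rw [W_getD_mid x _ j (by omega)]
        rw [hu2 j hj, show b - 1 + (j+1) = b + j by omega]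
      · have hjL : j = L := by omega
        subst hjL
        rw [show (L:ℕ) + 1 = u.length + 1 by omega, W_getD_end,
          show b - 1 + (u.length + 1) = b + L by omega]
        exact hend


lemma no_ccc (t : ℕ → Bool) (ht : IsTMWord t) (c : Bool) : ¬ IsFactorI [c, c, c] t := by
  rintro ⟨k, hk⟩
  have h0 := hk 0 (by simp)
  have h1 := hk 1 (by simp)
  have h2 := hk 2 (by simp)
  simp only [List.getD_cons_zero, List.getD_cons_succ, Nat.add_zero] at h0 h1 h2
  obtain ⟨a, ha⟩ := pair_odd t ht k (by rw [← h0, ← h1])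
  obtain ⟨b, hb⟩ := pair_odd t ht (k+1) (by rw [← h1, show k+1+1 = k+2 by ring, ← h2])
  omega

theorem tm_forbidden_words (t : ℕ → Bool) (ht : IsTMWord t) :
    ¬ IsFactorI [false, false, false] t ∧ ¬ IsFactorI [true, true, true] t ∧
    ∀ (x : Bool) (n : ℕ), ¬ IsFactorI ([x] ++ muW^[2 * n] [x, !x, x] ++ [x]) t := by
  refine ⟨no_ccc t ht false, no_ccc t ht true, ?_⟩
  rintro x n ⟨k, hk⟩
  exact main_step t ht n x k hk
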